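/- Let A be a symmetric positive semidefinite n×n real matrix, b ∈ ℝⁿ, f(x) = (1/2)⟨Ax, x⟩ − ⟨b, x⟩, and let S ⊆ ℝⁿ be a nonempty convex compact set. Let L₁ = max_{i,j} |A_{ij}| and R₁ = max_{x,y ∈ S} ‖x − y‖₁. Let x* minimize f over S. Consider the Frank–Wolfe iterates: x¹ ∈ S, and for k ≥ 1, y^k ∈ S satisfies ⟨∇f(x^k), y^k⟩ ≤ ⟨∇f(x^k), z⟩ for all z ∈ S, and x^{k+1} = (1 − γ_k) x^k + γ_k y^k with γ_k = 2/(k+1). Then for every N ≥ 2, f(x^N) − f(x*) ≤ 2 L₁ R₁² / (N + 1). -/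

import Mathlib

namespace FW4

variable {n : ℕ} (A : Matrix (Fin n) (Fin n) ℝ)

noncomputable def B (u v : Fin n → ℝ) : ℝ := ∑ i, A.mulVec u i * v i

lemma B_add_left (u v w : Fin n → ℝ) : B A (u + v) w = B A u w + B A v w := by
  simp [B, Matrix.mulVec_add, add_mul, Finset.sum_add_distrib]

lemma B_smul_left (c : ℝ) (u w : Fin n → ℝ) : B A (c • u) w = c * B A u w := by
  simp [B, Matrix.mulVec_smul, Finset.mul_sum, mul_assoc]

lemma B_add_right (u v w : Fin n → ℝ) : B A u (v + w) = B A u v + B A u w := by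
  simp [B, mul_add, Finset.sum_add_distrib]

lemma B_smul_right (c : ℝ) (u w : Fin n → ℝ) : B A u (c • w) = c * B A u w := by
  simp [B, Finset.mul_sum, mul_left_comm]

lemma B_symm (hs : ∀ i j, A i j = A j i) (u v : Fin n → ℝ) : B A u v = B A v u := by
  simp only [B, Matrix.mulVec, dotProduct, Finset.sum_mul]
  rw [Finset.sum_comm]
  exact Finset.sum_congr rfl fun i _ => Finset.sum_congr rfl fun j _ => by rw [hs]; ring

noncomputable def F (b : Fin n → ℝ) (u : Fin n → ℝ) : ℝ :=
  (1 / 2) * (∑ i, A.mulVec u i * u i) - ∑ i, b i * u i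

lemma grad_eq (b : Fin n → ℝ) (u d : Fin n → ℝ) :
    ∑ i, (A.mulVec u i - b i) * d i = B A u d - ∑ i, b i * d i := by
  simp [B, sub_mul, Finset.sum_sub_distrib]

lemma F_expand (hs : ∀ i j, A i j = A j i) (b : Fin n → ℝ) (γ : ℝ) (u v : Fin n → ℝ) :
    F A b (u + γ • (v - u)) =
      F A b u + γ * (∑ i, (A.mulVec u i - b i) * (v i - u i))
        + γ ^ 2 / 2 * B A (v - u) (v - u) := by
  have hF : ∀ w, F A b w = B A w w / 2 - ∑ i, b i * w i := by
    intro w; simp [F, B]; ring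
  have hl : ∑ i, b i * (u + γ • (v - u)) i
      = (∑ i, b i * u i) + γ * ∑ i, b i * (v i - u i) := by
    simp [mul_add, Finset.sum_add_distrib, Finset.mul_sum, mul_left_comm]
  have hgr : ∑ i, (A.mulVec u i - b i) * (v i - u i)
      = B A u (v - u) - ∑ i, b i * (v i - u i) := by
    simpa using grad_eq A b u (v - u)
  rw [hF, hF, hgr, B_add_left, B_add_right, B_add_right, B_smul_left, B_smul_left,
    B_smul_right, B_smul_right, B_symm A hs (v - u) u, hl]
  ring

lemma B_le (L₁ : ℝ) (hL : ∀ i j, |A i j| ≤ L₁) (d : Fin n → ℝ) :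
    B A d d ≤ L₁ * (∑ i, |d i|) ^ 2 := by
  have h1 : B A d d ≤ ∑ i, ∑ j, L₁ * |d j| * |d i| := by
    simp only [B, Matrix.mulVec, dotProduct, Finset.sum_mul]
    refine Finset.sum_le_sum fun i _ => Finset.sum_le_sum fun j _ => ?_
    calc A i j * d j * d i ≤ |A i j * d j * d i| := le_abs_self _
      _ = |A i j| * |d j| * |d i| := by rw [abs_mul, abs_mul]
      _ ≤ L₁ * |d j| * |d i| :=
          mul_le_mul_of_nonneg_right (mul_le_mul_of_nonneg_right (hL i j) (abs_nonneg _))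
            (abs_nonneg _)
  calc B A d d ≤ ∑ i, ∑ j, L₁ * |d j| * |d i| := h1
    _ = L₁ * (∑ i, |d i|) ^ 2 := by
        rw [sq, Finset.sum_mul_sum, Finset.mul_sum]
        refine Finset.sum_congr rfl fun i _ => ?_
        rw [Finset.mul_sum]
        exact Finset.sum_congr rfl fun j _ => by ring

end FW4

/-- Frank–Wolfe convergence for a quadratic `f x = (1/2)⟨Ax,x⟩ - ⟨b,x⟩` (`A` symmetric PSD)
on a nonempty convex compact `S`, with `L₁ = max_{i,j}|A_{ij}|`,
`R₁ = max_{x,y ∈ S}‖x-y‖₁`, and steps `γ_k = 2/(k+1)`: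
for every `N ≥ 2`, `f(x^N) - f(x*) ≤ 2 L₁ R₁² / (N+1)`. -/
theorem stmt4 {n : ℕ} (A : Matrix (Fin n) (Fin n) ℝ) (hA : A.PosSemidef)
    (b : Fin n → ℝ) (f : (Fin n → ℝ) → ℝ)
    (hf : ∀ x, f x = (1 / 2) * (∑ i, A.mulVec x i * x i) - ∑ i, b i * x i)
    (S : Set (Fin n → ℝ)) (hSne : S.Nonempty) (hSconv : Convex ℝ S)
    (hScomp : IsCompact S)
    (L₁ : ℝ) (hL₁ : IsGreatest {v | ∃ i j, v = |A i j|} L₁)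
    (R₁ : ℝ) (hR₁ : IsGreatest {v | ∃ x ∈ S, ∃ y ∈ S, v = ∑ i, |x i - y i|} R₁)
    (xstar : Fin n → ℝ) (hxstar : xstar ∈ S) (hmin : ∀ z ∈ S, f xstar ≤ f z)
    (x y : ℕ → Fin n → ℝ) (hx1 : x 1 ∈ S)
    (hy : ∀ k, 1 ≤ k → y k ∈ S ∧ ∀ z ∈ S,
      (∑ i, (A.mulVec (x k) i - b i) * y k i) ≤ ∑ i, (A.mulVec (x k) i - b i) * z i)
    (hupd : ∀ k, 1 ≤ k →
      x (k + 1) = (1 - 2 / ((k : ℝ) + 1)) • x k + (2 / ((k : ℝ) + 1)) • y k)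
    (N : ℕ) (hN : 2 ≤ N) :
    f (x N) - f xstar ≤ 2 * L₁ * R₁ ^ 2 / ((N : ℝ) + 1) := by
  classical
  have hfF : f = FW4.F A b := by funext u; rw [hf]; rfl
  have hs : ∀ i j, A i j = A j i := by
    intro i j
    have h := congrFun (congrFun hA.1 j) i
    simpa [Matrix.conjTranspose_apply] using h
  have hBpos : ∀ d, 0 ≤ FW4.B A d d := by
    intro d
    have h := hA.dotProduct_mulVec_nonneg d
    simpa [dotProduct, FW4.B, mul_comm] using h
  have hLb : ∀ i j, |A i j| ≤ L₁ := fun i j => hL₁.2 ⟨i, j, rfl⟩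
  obtain ⟨i0, j0, hij0⟩ := hL₁.1
  have hL0 : 0 ≤ L₁ := hij0 ▸ abs_nonneg _
  have hC : 0 ≤ L₁ * R₁ ^ 2 := by positivity
  have hxS : ∀ k, 1 ≤ k → x k ∈ S := by
    intro k hk
    induction k, hk using Nat.le_induction with
    | base => exact hx1
    | succ k hk ih =>
      rw [hupd k hk]
      have hk1 : (1:ℝ) ≤ (k:ℝ) := by exact_mod_cast hk
      have hγ0 : (0:ℝ) ≤ 2 / ((k:ℝ)+1) := by positivity
      have hγ1 : 2 / ((k:ℝ)+1) ≤ 1 := by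
        rw [div_le_one (by linarith)]; linarith
      exact hSconv ih (hy k hk).1 (by linarith) hγ0 (by ring)
  have hRb : ∀ u ∈ S, ∀ v ∈ S, (∑ i, |u i - v i|) ≤ R₁ :=
    fun u hu v hv => hR₁.2 ⟨u, hu, v, hv, rfl⟩
  -- key recursion
  have key : ∀ k, 1 ≤ k → f (x (k+1)) - f xstar ≤
      (1 - 2/((k:ℝ)+1)) * (f (x k) - f xstar) + (2/((k:ℝ)+1))^2 / 2 * (L₁ * R₁^2) := by
    intro k hk
    have hk1 : (1:ℝ) ≤ (k:ℝ) := by exact_mod_cast hk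
    set γ : ℝ := 2/((k:ℝ)+1) with hγdef
    have hγ0 : 0 ≤ γ := by positivity
    have hxk : x k ∈ S := hxS k hk
    have hyk : y k ∈ S := (hy k hk).1
    have hupd' : x (k+1) = x k + γ • (y k - x k) := by
      rw [hupd k hk]; module
    have hexp := FW4.F_expand A hs b γ (x k) (y k)
    have hg1 : ∑ i, (A.mulVec (x k) i - b i) * (y k i - x k i)
        ≤ ∑ i, (A.mulVec (x k) i - b i) * (xstar i - x k i) := by
      have h := (hy k hk).2 xstar hxstar
      simp only [mul_sub, Finset.sum_sub_distrib]
      linarith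
    have hconv : ∑ i, (A.mulVec (x k) i - b i) * (xstar i - x k i)
        ≤ FW4.F A b xstar - FW4.F A b (x k) := by
      have h1 := FW4.F_expand A hs b 1 (x k) xstar
      have h2 : x k + (1:ℝ) • (xstar - x k) = xstar := by module
      rw [h2] at h1
      have h3 := hBpos (xstar - x k)
      nlinarith [h1]
    have hq : FW4.B A (y k - x k) (y k - x k) ≤ L₁ * R₁^2 := by
      have h1 := FW4.B_le A L₁ hLb (y k - x k)
      have h2 : (∑ i, |(y k - x k) i|) ≤ R₁ := by
        have h := hRb (y k) hyk (x k) hxk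
        simpa using h
      have h3 : (0:ℝ) ≤ ∑ i, |(y k - x k) i| := Finset.sum_nonneg fun i _ => abs_nonneg _
      have h4 : (∑ i, |(y k - x k) i|)^2 ≤ R₁^2 := pow_le_pow_left₀ h3 h2 2
      exact h1.trans (mul_le_mul_of_nonneg_left h4 hL0)
    rw [hfF, hupd', hexp]
    have t1 : γ * (∑ i, (A.mulVec (x k) i - b i) * (y k i - x k i))
        ≤ γ * (FW4.F A b xstar - FW4.F A b (x k)) :=
      mul_le_mul_of_nonneg_left (hg1.trans hconv) hγ0
    have t2 : γ^2/2 * FW4.B A (y k - x k) (y k - x k) ≤ γ^2/2 * (L₁ * R₁^2) :=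
      mul_le_mul_of_nonneg_left hq (by positivity)
    linarith
  -- main induction
  have main : ∀ k, 2 ≤ k → f (x k) - f xstar ≤ 2 * L₁ * R₁^2 / ((k:ℝ)+1) := by
    intro k hk
    induction k, hk using Nat.le_induction with
    | base =>
      have h := key 1 le_rfl
      norm_num at h ⊢
      linarith
    | succ k hk ih =>
      have h := key k (le_trans one_le_two hk)
      have ht : (2:ℝ) ≤ (k:ℝ) := by exact_mod_cast hk
      have h1 : (0:ℝ) < (k:ℝ)+1 := by linarith
      have h2 : (0:ℝ) < (k:ℝ)+2 := by linarith
      have hγle : (0:ℝ) ≤ 1 - 2/((k:ℝ)+1) := by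
        rw [sub_nonneg, div_le_one h1]; linarith
      have step1 : (1 - 2/((k:ℝ)+1)) * (f (x k) - f xstar)
          ≤ (1 - 2/((k:ℝ)+1)) * (2*L₁*R₁^2/((k:ℝ)+1)) :=
        mul_le_mul_of_nonneg_left ih hγle
      have calc2 : (1 - 2/((k:ℝ)+1)) * (2*L₁*R₁^2/((k:ℝ)+1)) + (2/((k:ℝ)+1))^2/2 * (L₁*R₁^2)
          ≤ 2*L₁*R₁^2/((k:ℝ)+2) := by
        have keq : 2*L₁*R₁^2/((k:ℝ)+2)
            - ((1 - 2/((k:ℝ)+1)) * (2*L₁*R₁^2/((k:ℝ)+1)) + (2/((k:ℝ)+1))^2/2 * (L₁*R₁^2))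
            = 2*(L₁*R₁^2) / (((k:ℝ)+1)^2*((k:ℝ)+2)) := by
          field_simp
          ring
        have hpos : 0 ≤ 2*(L₁*R₁^2) / (((k:ℝ)+1)^2*((k:ℝ)+2)) :=
          div_nonneg (by linarith) (by positivity)
        linarith
      push_cast
      have e : ((k:ℝ)+1)+1 = (k:ℝ)+2 := by ring
      rw [e]
      linarith
  exact main N hN
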